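/- If the series converges at some real R₀ > 1 and f(R₀) < 1, then Σ_{n≥1} n·aₙ converges and 0 ≤ f′(1) = Σ_{n≥1} n·aₙ ≤ (f(R₀) − f(1))/(R₀ − 1) < (1 − f(1))/(R₀ − 1) ≤ 1/(R₀ − 1). -/

import Mathlib

open MeasureTheory Filter
open scoped ENNReal NNReal Classical

/-- Setup for a free product of two graphs `V₁ ∗ V₂`: two disjoint countable vertex
sets with roots, each with at least two elements, transition matrices whose rows sum
to one, every vertex reachable from the root, a uniform positive lower bound `ε₀` on
the positive entries, and a mixing parameter `α ∈ (0,1)`. -/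
structure Setup (V₁ : Type) (V₂ : Type) [Countable V₁] [Countable V₂]
    [DecidableEq V₁] [DecidableEq V₂] where
  o₁ : V₁
  o₂ : V₂
  nontrivial₁ : ∃ x : V₁, x ≠ o₁
  nontrivial₂ : ∃ x : V₂, x ≠ o₂
  p₁ : V₁ → V₁ → ℝ
  p₂ : V₂ → V₂ → ℝ
  p₁_nonneg : ∀ x y, 0 ≤ p₁ x y
  p₂_nonneg : ∀ x y, 0 ≤ p₂ x y
  p₁_rowSum : ∀ x, HasSum (p₁ x) 1
  p₂_rowSum : ∀ x, HasSum (p₂ x) 1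
  /-- every vertex of `V₁` is reachable from the root `o₁` with positive probability -/
  acc₁ : ∀ x : V₁, ∃ l : List V₁, List.Chain (fun u v => 0 < p₁ u v) o₁ l ∧
    (o₁ :: l).getLast (List.cons_ne_nil _ _) = x
  acc₂ : ∀ x : V₂, ∃ l : List V₂, List.Chain (fun u v => 0 < p₂ u v) o₂ l ∧
    (o₂ :: l).getLast (List.cons_ne_nil _ _) = x
  ε₀ : ℝ
  ε₀_pos : 0 < ε₀
  ε₀_le₁ : ∀ x y, 0 < p₁ x y → ε₀ ≤ p₁ x y
  ε₀_le₂ : ∀ x y, 0 < p₂ x y → ε₀ ≤ p₂ x y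
  α : ℝ
  α_pos : 0 < α
  α_lt_one : α < 1

namespace Setup

variable {V₁ V₂ : Type} [Countable V₁] [Countable V₂] [DecidableEq V₁] [DecidableEq V₂]
variable (S : Setup V₁ V₂)

/-- A letter of the free product: an element of `V₁^× = V₁ ∖ {o₁}` or of `V₂^× = V₂ ∖ {o₂}`. -/
def Letter : Type := {x : V₁ // x ≠ S.o₁} ⊕ {x : V₂ // x ≠ S.o₂}

instance : DecidableEq S.Letter :=
  inferInstanceAs (DecidableEq ({x : V₁ // x ≠ S.o₁} ⊕ {x : V₂ // x ≠ S.o₂}))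
instance : Countable S.Letter :=
  inferInstanceAs (Countable ({x : V₁ // x ≠ S.o₁} ⊕ {x : V₂ // x ≠ S.o₂}))

/-- the factor a letter belongs to: `true` for `V₁^×`, `false` for `V₂^×`. -/
def ltype : S.Letter → Bool := Sum.elim (fun _ => true) (fun _ => false)

/-- An element of the free product `V = V₁ ∗ V₂`: a finite word over the alphabet
`V₁^× ∪ V₂^×` in which no two consecutive letters lie in the same factor. -/
def Word : Type := {l : List S.Letter // l.Chain' fun a b => S.ltype a ≠ S.ltype b}

instance : DecidableEq S.Word :=
  inferInstanceAs (DecidableEq {l : List S.Letter // l.Chain' fun a b => S.ltype a ≠ S.ltype b})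
instance : Countable S.Word :=
  inferInstanceAs (Countable {l : List S.Letter // l.Chain' fun a b => S.ltype a ≠ S.ltype b})
instance : MeasurableSpace S.Word := ⊤

/-- the empty word `o`. -/
def emp : S.Word := ⟨[], List.IsChain.nil⟩

/-- word length `‖u‖`. -/
def wlen (u : S.Word) : ℕ := u.val.length

/-- the last letter `[u]` of a word (`none` for the empty word). -/
def lastLetter (u : S.Word) : Option S.Letter := u.val.getLast?

/-- the type `τ(u)` of a word: the factor of its last letter (`none` for `o`). -/
def wtype (u : S.Word) : Option Bool := (u.val.getLast?).map S.ltype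

/-- the factor of the first letter of a word (`none` for `o`). -/
def firstType (u : S.Word) : Option Bool := (u.val.head?).map S.ltype

/-- the cone `C(x)`: all words having `x` as a prefix. -/
def cone (x : S.Word) : Set S.Word := {y | x.val <+: y.val}

/-- the one-letter word determined by a letter. -/
def single (g : S.Letter) : S.Word := ⟨[g], List.IsChain.singleton g⟩

/-- the word `u` with its last letter removed in case that letter lies in factor `i`
(so `u = (stripLast i u)·v` with `v ∈ Vᵢ`). -/
def stripLast (i : Bool) (u : S.Word) : List S.Letter :=
  if (u.val.getLast?).map S.ltype = some i then u.val.dropLast else u.val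

/-- the `V₁`-component of the last letter of `u` (`o₁` if the last letter is not in `V₁^×`). -/
def lastIn₁ (u : S.Word) : V₁ :=
  ((u.val.getLast?).map (Sum.elim Subtype.val fun _ => S.o₁)).getD S.o₁

/-- the `V₂`-component of the last letter of `u` (`o₂` if the last letter is not in `V₂^×`). -/
def lastIn₂ (u : S.Word) : V₂ :=
  ((u.val.getLast?).map (Sum.elim (fun _ => S.o₂) Subtype.val)).getD S.o₂

/-- the lift `p̄₁` of `P₁` to the free product: `p̄₁(xv,xw) = p₁(v,w)` for `v,w ∈ V₁`. -/
def pbar₁ (u w : S.Word) : ℝ :=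
  if S.stripLast true u = S.stripLast true w then S.p₁ (S.lastIn₁ u) (S.lastIn₁ w) else 0

/-- the lift `p̄₂` of `P₂` to the free product. -/
def pbar₂ (u w : S.Word) : ℝ :=
  if S.stripLast false u = S.stripLast false w then S.p₂ (S.lastIn₂ u) (S.lastIn₂ w) else 0

/-- the single-step transition probabilities `P = α·P̄₁ + (1−α)·P̄₂` of the random walk. -/
def step (u w : S.Word) : ℝ := S.α * S.pbar₁ u w + (1 - S.α) * S.pbar₂ u w

/-- single-step transition probabilities, as extended nonnegative reals. -/
noncomputable def stepE (u w : S.Word) : ℝ≥0∞ := ENNReal.ofReal (S.step u w)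

/-- the `n`-step transition probabilities `p^{(n)}(x,y)`. -/
noncomputable def pn : ℕ → S.Word → S.Word → ℝ≥0∞
  | 0, u, w => if u = w then 1 else 0
  | n + 1, u, w => ∑' v : S.Word, pn n u v * S.stepE v w

/-- `G′(x,x|1) = Σ_{n≥1} n·p^{(n)}(x,x)`, the derivative at `z = 1` of the Green
function `G(x,x|z)`. -/
noncomputable def Gderiv (x : S.Word) : ℝ≥0∞ := ∑' n : ℕ, (n : ℝ≥0∞) * S.pn n x x

/-- the assumption that all Green functions `G(x,y|z) = Σ p^{(n)}(x,y) zⁿ` have radius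
of convergence at least `R` for some `R > 1`. -/
def GreenRadiusGT1 : Prop :=
  ∃ R : ℝ≥0, 1 < R ∧ ∀ x y : S.Word, ∀ r : ℝ≥0, r < R →
    (∑' n : ℕ, S.pn n x y * (r : ℝ≥0∞) ^ n) ≠ ⊤

/-- `fvisit n y x` is the probability, starting at `y`, that the first visit to `x`
occurs exactly at time `n`. -/
noncomputable def fvisit : ℕ → S.Word → S.Word → ℝ≥0∞
  | 0, y, x => if y = x then 1 else 0
  | n + 1, y, x => if y = x then 0 else ∑' z : S.Word, S.stepE y z * fvisit n z x

/-- `U(x,x)`: the probability of returning to `x` when starting at `x`. -/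
noncomputable def Uret (x : S.Word) : ℝ≥0∞ :=
  ∑' n : ℕ, ∑' z : S.Word, S.stepE x z * S.fvisit n z x

/-- the exit times: `e₀ = 0` and `e_k = inf{m > e_{k−1} : ‖Xₙ‖ ≥ k for all n ≥ m}`
(`0` by convention if no such time exists). -/
noncomputable def eT : ℕ → (ℕ → S.Word) → ℕ
  | 0, _ => 0
  | k + 1, ω => sInf {m | eT k ω < m ∧ ∀ n ≥ m, k + 1 ≤ S.wlen (ω n)}

/-- `W_k = [X_{e_k}]`, the `k`-th stabilized letter. -/
noncomputable def Wlast (k : ℕ) (ω : ℕ → S.Word) : Option S.Letter :=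
  S.lastLetter (ω (S.eT k ω))

/-- the set of vertices visited up to time `n`. -/
def visited (n : ℕ) (ω : ℕ → S.Word) : Set S.Word := {x | ∃ j ≤ n, ω j = x}

/-- the shift `x⁻¹A` deleting the prefix `x` from each element of `A ⊆ C(x)`. -/
def wshift (x : S.Word) (A : Set S.Word) : Set S.Word := {y | ∃ a ∈ A, a.val = x.val ++ y.val}

/-- (the support of) `ψ_k`: for `k ≥ 2` the set obtained from
`{X₀,…,X_{e_k}} ∩ C(X_{e_{k−1}})` by deleting the prefix `X_{e_{k−1}}`; for `k = 1`
the set `{X₀,…,X_{e₁}} ∩ V*_{τ(X_{e₁})}`. -/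
noncomputable def psi (k : ℕ) (ω : ℕ → S.Word) : Set S.Word :=
  if k = 1 then
    {x | x ∈ S.visited (S.eT 1 ω) ω ∧ (x = S.emp ∨ S.firstType x = S.wtype (ω (S.eT 1 ω)))}
  else
    S.wshift (ω (S.eT (k - 1) ω)) (S.visited (S.eT k ω) ω ∩ S.cone (ω (S.eT (k - 1) ω)))

/-- the range `Rₙ = |{X₀,…,Xₙ}|`. -/
noncomputable def rangeCount (n : ℕ) (ω : ℕ → S.Word) : ℕ :=
  ((Finset.range (n + 1)).image ω).card

/-- the maximal exit time index `k(n) = max{k : e_k ≤ n}`. -/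
noncomputable def kmax (n : ℕ) (ω : ℕ → S.Word) : ℕ := sSup {k | S.eT k ω ≤ n}

end Setup

/-- A family of Markov measures for the random walk on the free product:
`P x` is the law of the walk started at `x`, so that the probability of any cylinder
`[X₀ = w₀, …, Xₙ = wₙ]` equals `δ_x(w₀)·∏ p(wᵢ, wᵢ₊₁)`. -/
structure RW {V₁ V₂ : Type} [Countable V₁] [Countable V₂] [DecidableEq V₁] [DecidableEq V₂]
    (S : Setup V₁ V₂) where
  P : S.Word → Measure (ℕ → S.Word)
  prob : ∀ x, IsProbabilityMeasure (P x)
  cyl : ∀ (x : S.Word) (n : ℕ) (w : Fin (n + 1) → S.Word),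
    P x {ω | ∀ i : Fin (n + 1), ω (i : ℕ) = w i} =
      (if w 0 = x then 1 else 0) * ∏ i : Fin n, S.stepE (w i.castSucc) (w i.succ)

namespace Setup

variable {V₁ V₂ : Type} [Countable V₁] [Countable V₂] [DecidableEq V₁] [DecidableEq V₂]
variable (S : Setup V₁ V₂)

/-- `ξᵢ = P[∃ n ≥ 1 : Xₙ ∈ Vᵢ^×]` (for the walk started at `o`). -/
noncomputable def xi (X : RW S) (i : Bool) : ℝ≥0∞ :=
  X.P S.emp {ω | ∃ n, 1 ≤ n ∧ S.wlen (ω n) = 1 ∧ S.wtype (ω n) = some i}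

/-- `D_k`, the support of `(W_k, ψ_k)`. -/
noncomputable def Dsupp (X : RW S) (k : ℕ) : Set (S.Letter × Set S.Word) :=
  {gf | 0 < X.P S.emp {ω | S.Wlast k ω = some gf.1 ∧ S.psi k ω = gf.2}}

/-- the event `[(W₁,ψ₁) = s₁, …, (W_k,ψ_k) = s_k]`. -/
noncomputable def histEvent (k : ℕ) (s : ℕ → S.Letter × Set S.Word) : Set (ℕ → S.Word) :=
  {ω | ∀ j, 1 ≤ j → j ≤ k → S.Wlast j ω = some (s j).1 ∧ S.psi j ω = (s j).2}

/-- `q` is a (homogeneous) transition kernel for the process `(W_k, ψ_k)_{k≥1}`: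
the conditional probability of the next state given the whole history depends only on
the current and the next state, via `q`. -/
def IsExitKernel (X : RW S) (q : S.Letter × Set S.Word → S.Letter × Set S.Word → ℝ≥0∞) : Prop :=
  ∀ k, 1 ≤ k → ∀ s : ℕ → S.Letter × Set S.Word,
    0 < X.P S.emp (S.histEvent k s) →
    X.P S.emp (S.histEvent (k + 1) s) = X.P S.emp (S.histEvent k s) * q (s k) (s (k + 1))

/-- `R̃₁` as a function of the state `(g,f)`: `|supp f ∖ C(g)|`. -/
noncomputable def RtilFun (gf : S.Letter × Set S.Word) : ℝ≥0∞ :=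
  ((gf.2 \ S.cone (S.single gf.1)).encard : ℝ≥0∞)

/-- `O₁` as a function of the state `(g,f)`: `|supp f ∩ C(g)|`. -/
noncomputable def OverFun (gf : S.Letter × Set S.Word) : ℝ≥0∞ :=
  ((gf.2 ∩ S.cone (S.single gf.1)).encard : ℝ≥0∞)

/-- cone of an optional letter. -/
def coneOpt : Option S.Letter → Set S.Word
  | some g => S.cone (S.single g)
  | none => ∅

/-- the overhead `O_k = |supp(ψ_k) ∩ C(W_k)|`. -/
noncomputable def Ocount (k : ℕ) (ω : ℕ → S.Word) : ℝ≥0∞ :=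
  ((S.psi k ω ∩ S.coneOpt (S.Wlast k ω)).encard : ℝ≥0∞)

/-- `|supp(ψ_k)|`. -/
noncomputable def psiCount (k : ℕ) (ω : ℕ → S.Word) : ℝ≥0∞ :=
  ((S.psi k ω).encard : ℝ≥0∞)

end Setup

/-- `n`-step transition powers of a kernel `q` on a countable state space. -/
noncomputable def kpow {σ : Type} (q : σ → σ → ℝ≥0∞) : ℕ → σ → σ → ℝ≥0∞
  | 0, s, t => if s = t then 1 else 0
  | n + 1, s, t => ∑' u : σ, kpow q n s u * q u t

/-- `π` is an invariant (stationary) probability measure, supported on `D`, of the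
chain with transition kernel `q`. -/
def IsStationaryDist {σ : Type} (q : σ → σ → ℝ≥0∞) (D : Set σ) (π : σ → ℝ≥0∞) : Prop :=
  (∑' s : σ, π s) = 1 ∧ (∀ s, s ∉ D → π s = 0) ∧ ∀ t, (∑' s : σ, π s * q s t) = π t

/-- if a power series `f(z) = Σ_{n≥1} aₙ zⁿ` with nonnegative coefficients
converges at some real `R₀ > 1` with `f(R₀) < 1`, then `Σ n·aₙ` converges and
`0 ≤ f′(1) = Σ n·aₙ ≤ (f(R₀) − f(1))/(R₀ − 1) < (1 − f(1))/(R₀ − 1) ≤ 1/(R₀ − 1)`. -/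
theorem power_series_deriv_bound (a : ℕ → ℝ) (ha : ∀ n, 0 ≤ a n) (h0 : a 0 = 0)
    (R₀ : ℝ) (hR₀ : 1 < R₀)
    (hsum : Summable fun n : ℕ => a n * R₀ ^ n)
    (hlt : (∑' n : ℕ, a n * R₀ ^ n) < 1) :
    Summable (fun n : ℕ => (n : ℝ) * a n) ∧
    HasDerivAt (fun z : ℝ => ∑' n : ℕ, a n * z ^ n) (∑' n : ℕ, (n : ℝ) * a n) 1 ∧
    0 ≤ (∑' n : ℕ, (n : ℝ) * a n) ∧
    (∑' n : ℕ, (n : ℝ) * a n) ≤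
      ((∑' n : ℕ, a n * R₀ ^ n) - (∑' n : ℕ, a n * (1 : ℝ) ^ n)) / (R₀ - 1) ∧
    ((∑' n : ℕ, a n * R₀ ^ n) - (∑' n : ℕ, a n * (1 : ℝ) ^ n)) / (R₀ - 1) <
      (1 - (∑' n : ℕ, a n * (1 : ℝ) ^ n)) / (R₀ - 1) ∧
    (1 - (∑' n : ℕ, a n * (1 : ℝ) ^ n)) / (R₀ - 1) ≤ 1 / (R₀ - 1) := by
  have hR0pos : (0:ℝ) < R₀ := by linarith
  set r : ℝ := (1 + R₀) / 2 with hr_def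
  have hr1 : 1 < r := by rw [hr_def]; linarith
  have hrR : r < R₀ := by rw [hr_def]; linarith
  have hr0 : (0:ℝ) < r := by linarith
  clear_value r
  set B : ℝ := ∑' n : ℕ, a n * R₀ ^ n with hB_def
  have hB : ∀ n, a n * R₀ ^ n ≤ B := fun n =>
    Summable.le_tsum hsum n fun m _ => mul_nonneg (ha m) (by positivity)
  have hBnn : 0 ≤ B := le_trans (by simpa [h0] using le_refl (0:ℝ)) ((by simpa [h0] using hB 0 : (0:ℝ) ≤ B))
  clear_value B
  -- summable bound for derivatives
  set u : ℕ → ℝ := fun n => (B / r) * ((n : ℝ) * (r / R₀) ^ n) with hu_def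
  have hgeo : Summable fun n : ℕ => (n : ℝ) * (r / R₀) ^ n := by
    have h : ‖r / R₀‖ < 1 := by
      rw [Real.norm_eq_abs, abs_of_pos (by positivity)]
      rw [div_lt_one hR0pos]; exact hrR
    simpa using summable_pow_mul_geometric_of_norm_lt_one 1 h
  have hu : Summable u := hgeo.mul_left _
  -- derivative pointwise
  have hderiv : ∀ (n : ℕ) (y : ℝ), y ∈ Set.Ioo (-r) r →
      HasDerivAt (fun z : ℝ => a n * z ^ n) (a n * ((n : ℝ) * y ^ (n - 1))) y :=
    fun n y _ => (hasDerivAt_pow n y).const_mul (a n)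
  -- bound
  have hbound : ∀ (n : ℕ) (y : ℝ), y ∈ Set.Ioo (-r) r →
      ‖a n * ((n : ℝ) * y ^ (n - 1))‖ ≤ u n := by
    intro n y hy
    have hya : |y| ≤ r := by
      rw [abs_le]; exact ⟨hy.1.le, hy.2.le⟩
    rw [Real.norm_eq_abs, abs_mul, abs_mul, abs_of_nonneg (ha n),
      Nat.abs_cast, abs_pow]
    rcases Nat.eq_zero_or_pos n with hn | hn
    · subst hn; simp [hu_def]
    · have h1 : |y| ^ (n - 1) ≤ r ^ (n - 1) :=
        pow_le_pow_left₀ (abs_nonneg y) hya _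
      have h2 : a n ≤ B / R₀ ^ n := by
        rw [le_div_iff₀ (by positivity)]; exact hB n
      calc a n * ((n : ℝ) * |y| ^ (n - 1))
          ≤ (B / R₀ ^ n) * ((n : ℝ) * r ^ (n - 1)) := by
            apply mul_le_mul h2 (by
              apply mul_le_mul_of_nonneg_left h1 (by positivity)) (by positivity) (div_nonneg hBnn (by positivity))
        _ = u n := by
            have hrn : r ^ (n - 1) = r ^ n / r := by
              rw [eq_div_iff (ne_of_gt hr0), ← pow_succ, Nat.sub_add_cancel hn]
            simp only [hu_def, hrn, div_pow]
            field_simp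
  have h1mem : (1:ℝ) ∈ Set.Ioo (-r) r := ⟨by linarith, hr1⟩
  have hsuma : Summable a := by
    apply Summable.of_nonneg_of_le ha (fun n => ?_) hsum
    exact le_mul_of_one_le_right (ha n) (one_le_pow₀ hR₀.le)
  have hsum1 : Summable fun n : ℕ => a n * (1:ℝ) ^ n := by simpa using hsuma
  -- the derivative at 1
  have hd : HasDerivAt (fun z : ℝ => ∑' n : ℕ, a n * z ^ n)
      (∑' n : ℕ, a n * ((n : ℝ) * (1:ℝ) ^ (n - 1))) 1 :=
    hasDerivAt_tsum_of_isPreconnected hu isOpen_Ioo (convex_Ioo _ _).isPreconnected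
      hderiv hbound h1mem hsum1 h1mem
  have hsumd : Summable fun n : ℕ => a n * ((n : ℝ) * (1:ℝ) ^ (n - 1)) := by
    apply Summable.of_norm_bounded hu
    exact fun n => hbound n 1 h1mem
  have hcongr : ∀ n : ℕ, a n * ((n : ℝ) * (1:ℝ) ^ (n - 1)) = (n : ℝ) * a n := by
    intro n; rw [one_pow]; ring
  have hsumna : Summable fun n : ℕ => (n : ℝ) * a n := hsumd.congr hcongr
  have htseq : (∑' n : ℕ, a n * ((n : ℝ) * (1:ℝ) ^ (n - 1))) = ∑' n : ℕ, (n : ℝ) * a n :=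
    tsum_congr hcongr
  rw [htseq] at hd
  refine ⟨hsumna, hd, tsum_nonneg (fun n => mul_nonneg (Nat.cast_nonneg n) (ha n)), ?_, ?_, ?_⟩
  · -- main inequality
    rw [le_div_iff₀ (by linarith)]
    have key : ∀ n : ℕ, (n : ℝ) * a n * (R₀ - 1) + a n * (1:ℝ) ^ n ≤ a n * R₀ ^ n := by
      intro n
      have h := one_add_mul_le_pow (a := R₀ - 1) (by linarith) n
      have h' : 1 + (n : ℝ) * (R₀ - 1) ≤ R₀ ^ n := by
        exact le_of_le_of_eq h (by ring)
      have hm := mul_le_mul_of_nonneg_left h' (ha n)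
      simp only [one_pow]
      nlinarith [hm]
    have hs2 : Summable fun n : ℕ => (n : ℝ) * a n * (R₀ - 1) + a n * (1:ℝ) ^ n :=
      (hsumna.mul_right _).add hsum1
    have := Summable.tsum_le_tsum key hs2 hsum
    rw [Summable.tsum_add (hsumna.mul_right _) hsum1, tsum_mul_right] at this
    linarith
  · gcongr <;> linarith
  · have hA : (0:ℝ) ≤ ∑' n : ℕ, a n * (1:ℝ) ^ n :=
      tsum_nonneg fun n => mul_nonneg (ha n) (by positivity)
    gcongr <;> linarith
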